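/- Let G be a finite weighted graph and k ≥ 1. Suppose H is an induced subgraph maximizing |H|(d(H) − α) over all induced subgraphs, where α = dal(G,k)/2. Then d(H) ≥ dal(G,k)/2, and moreover |H| ≥ |H*|·dal(G,k)/(2 d(H)) for any subgraph H* with |H*| ≥ k achieving density dal(G,k). -/
import Mathlib


open Finset

variable {V : Type*} [Fintype V] [DecidableEq V]

/-- Weighted degree of vertex `v` in the subgraph induced on `S`. -/
def wDeg (w : V → V → ℝ) (S : Finset V) (v : V) : ℝ := ∑ u ∈ S, w v u

/-- Total edge weight of the subgraph induced on `S`. -/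
noncomputable def wTot (w : V → V → ℝ) (S : Finset V) : ℝ :=
  (∑ u ∈ S, ∑ x ∈ S, w u x) / 2

/-- Density of the subgraph induced on `S`. -/
noncomputable def dens (w : V → V → ℝ) (S : Finset V) : ℝ := wTot w S / S.card
/-- if H maximizes |H|(d(H) − α) with α = dal(G,k)/2, then
d(H) ≥ dal(G,k)/2 and |H| ≥ |H*|·dal(G,k)/(2 d(H)). -/
theorem stmt9 (w : V → V → ℝ) (hsymm : ∀ u v, w u v = w v u)
    (hnn : ∀ u v, 0 ≤ w u v) (hdiag : ∀ v, w v v = 0)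
    (k : ℕ) (hk : 1 ≤ k) (dal : ℝ) (hdal : 0 < dal)
    (Hstar : Finset V) (hstar_card : k ≤ Hstar.card) (hstar_dens : dens w Hstar = dal)
    (hopt : ∀ S : Finset V, k ≤ S.card → dens w S ≤ dal)
    (H : Finset V) (hHne : H.Nonempty)
    (hmax : ∀ S : Finset V,
      (S.card : ℝ) * (dens w S - dal / 2) ≤ (H.card : ℝ) * (dens w H - dal / 2)) :
    dal / 2 ≤ dens w H ∧
    (Hstar.card : ℝ) * dal / (2 * dens w H) ≤ (H.card : ℝ) := by
  have hsc : (0:ℝ) < Hstar.card := by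
    exact_mod_cast Nat.lt_of_lt_of_le (Nat.lt_of_lt_of_le Nat.zero_lt_one hk) hstar_card
  have hHc : (0:ℝ) < H.card := by exact_mod_cast hHne.card_pos
  have h1 := hmax Hstar
  rw [hstar_dens] at h1
  have hpos : 0 < (H.card : ℝ) * (dens w H - dal / 2) := by nlinarith
  have hd : dal / 2 < dens w H := by nlinarith
  refine ⟨le_of_lt hd, ?_⟩
  have hdens : 0 < dens w H := by linarith
  rw [div_le_iff₀ (by positivity)]
  nlinarith
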